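/- Let n ≥ 1 and let X, Y be independent Gaussian random vectors in ℝⁿ with X ~ N(μ₁·𝟏, (1/2)·Iₙ) and Y ~ N(μ₂·𝟏, (1/2)·Iₙ). Independently of X and Y, each coordinate index i ∈ {1,…,n} of X and of Y is observed independently with probability p ∈ (0,1]; let Q ⊆ {1,…,n} be the (random) set of coordinates observed in both X and Y (so each i lies in Q independently with probability q = p²). Define the estimated squared distance d_p(X,Y)² = Σ_{i∈Q} (X_i − Y_i)². Set μ = μ₁ − μ₂. Then for every ε with 0 < ε < q(1+μ²) and every γ with 0 < γ < (q(1+μ²) − ε)/(1+μ²), one has Pr[d_p(X,Y)² < εn] ≤ exp(−2γ²n) + (exp(−((q−γ)(1+μ²) − ε)²/(4(q−γ)(1+2μ²))))ⁿ. -/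

import Mathlib

open MeasureTheory ProbabilityTheory

section MRAux

open Real

private theorem mr_log_lower (x : ℝ) (hx : 0 ≤ x) : x - x^2/2 ≤ Real.log (1+x) := by
  have key : MonotoneOn (fun y : ℝ => Real.log (1+y) - y + y^2/2) (Set.Ici 0) := by
    have hder : ∀ y : ℝ, 0 ≤ y →
        HasDerivAt (fun y : ℝ => Real.log (1+y) - y + y^2/2) (y^2/(1+y)) y := by
      intro y hy
      have h1 : HasDerivAt (fun y : ℝ => 1 + y) 1 y := by
        simpa using (hasDerivAt_id y).const_add 1
      have h2 : HasDerivAt (fun y : ℝ => Real.log (1+y)) (1/(1+y)) y := by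
        simpa using h1.log (by positivity)
      have h3 : HasDerivAt (fun y : ℝ => y^2/2) y y := by
        simpa using (hasDerivAt_pow 2 y).div_const 2
      have := (h2.sub (hasDerivAt_id y)).add h3
      have hy1 : (1:ℝ) + y ≠ 0 := by positivity
      refine this.congr_deriv ?_
      field_simp
      ring
    refine monotoneOn_of_deriv_nonneg (convex_Ici 0) ?_ ?_ ?_
    · intro y hy
      exact ((hder y hy).continuousAt).continuousWithinAt
    · intro y hy
      rw [interior_Ici] at hy
      exact ((hder y (le_of_lt hy)).differentiableAt).differentiableWithinAt
    · intro y hy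
      rw [interior_Ici] at hy
      have hy' : 0 < y := hy
      rw [(hder y (le_of_lt hy)).deriv]
      positivity
  have h0 := key (Set.mem_Ici.2 le_rfl) (Set.mem_Ici.2 hx) hx
  simp at h0
  linarith

private theorem mr_bernoulli (q t : ℝ) (hq0 : 0 ≤ q) (hq1 : q ≤ 1) (ht : t ≤ 0) :
    1 - q + q * exp t ≤ exp (q * t + t^2/8) := by
  have hD : ∀ s : ℝ, 0 < 1 - q + q * exp s := by
    intro s
    rcases lt_or_eq_of_le hq1 with h | h
    · nlinarith [exp_pos s, mul_nonneg hq0 (exp_pos s).le]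
    · rw [← h]; have := exp_pos s; nlinarith
  set k : ℝ → ℝ := fun s => q + s/4 - q * exp s / (1 - q + q * exp s) with hk
  have hDder : ∀ s : ℝ, HasDerivAt (fun s => 1 - q + q * exp s) (q * exp s) s := by
    intro s
    simpa using ((Real.hasDerivAt_exp s).const_mul q).const_add (1-q)
  have hkder : ∀ s : ℝ, HasDerivAt k
      (1/4 - (q * exp s * (1 - q + q * exp s) - q * exp s * (q * exp s)) / (1 - q + q * exp s)^2) s := by
    intro s
    have h1 : HasDerivAt (fun s => q * exp s) (q * exp s) s := (Real.hasDerivAt_exp s).const_mul q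
    have h2 := h1.div (hDder s) (ne_of_gt (hD s))
    have h3 : HasDerivAt (fun s : ℝ => q + s/4) (1/4) s := by
      simpa using ((hasDerivAt_id s).div_const 4).const_add q
    exact h3.sub h2
  have hkmono : Monotone k := by
    refine monotone_of_deriv_nonneg (fun s => ((hkder s).differentiableAt)) ?_
    intro s
    rw [(hkder s).deriv]
    have he := exp_pos s
    have h4 : q * exp s * (1 - q + q * exp s) - q * exp s * (q * exp s) = (q * exp s) * (1 - q) := by ring
    rw [h4]
    rw [sub_nonneg, div_le_iff₀ (pow_pos (hD s) 2)]
    nlinarith [sq_nonneg (1 - q - q * exp s), mul_nonneg hq0 he.le]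
  have hk0 : k 0 = 0 := by
    simp only [hk]
    rw [Real.exp_zero]
    field_simp
    ring
  have hknp : ∀ s ≤ 0, k s ≤ 0 := fun s hs => hk0 ▸ hkmono hs
  set h : ℝ → ℝ := fun s => q*s + s^2/8 - Real.log (1 - q + q * exp s) with hh
  have hhder : ∀ s : ℝ, HasDerivAt h (k s) s := by
    intro s
    have h2 := (hDder s).log (ne_of_gt (hD s))
    have h3 : HasDerivAt (fun s : ℝ => q*s + s^2/8) (q + s/4) s := by
      have := ((hasDerivAt_id s).const_mul q).add ((hasDerivAt_pow 2 s).div_const 8)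
      exact this.congr_deriv (by rw [show (2:ℕ)-1 = 1 from rfl]; push_cast; ring)
    exact h3.sub h2
  have hanti : AntitoneOn h (Set.Iic 0) := by
    refine antitoneOn_of_deriv_nonpos (convex_Iic 0) ?_ ?_ ?_
    · intro y _; exact (hhder y).continuousAt.continuousWithinAt
    · intro y _; exact (hhder y).differentiableAt.differentiableWithinAt
    · intro y hy
      rw [interior_Iic] at hy
      rw [(hhder y).deriv]
      exact hknp y hy.le
  have h0 : h 0 = 0 := by simp [hh]
  have hge := hanti (Set.mem_Iic.2 ht) (Set.mem_Iic.2 le_rfl) ht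
  rw [h0] at hge
  have hlog : Real.log (1 - q + q * exp t) ≤ q*t + t^2/8 := by
    simp only [hh] at hge; linarith
  calc 1 - q + q * exp t = exp (Real.log (1 - q + q * exp t)) := (exp_log (hD t)).symm
    _ ≤ exp (q*t + t^2/8) := exp_le_exp.mpr hlog

private theorem mr_numeric (s ε μ : ℝ) (hs : 0 < s) (hδ : 0 < s*(1+μ^2) - ε) :
    (s*(1+μ^2) - ε)/(2*s*(1+2*μ^2))*ε
      - s*(Real.log (Real.sqrt (1+2*((s*(1+μ^2) - ε)/(2*s*(1+2*μ^2)))))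
          + ((s*(1+μ^2) - ε)/(2*s*(1+2*μ^2)))*μ^2/(1+2*((s*(1+μ^2) - ε)/(2*s*(1+2*μ^2)))))
      ≤ -((s*(1+μ^2) - ε)^2) / (4*s*(1+2*μ^2)) := by
  have hm : (0:ℝ) < 1+2*μ^2 := by positivity
  set t : ℝ := (s*(1+μ^2) - ε)/(2*s*(1+2*μ^2)) with htdef
  have ht : 0 < t := by positivity
  have hK : (0:ℝ) < 1+2*t := by linarith
  have hlog : 2*t - (2*t)^2/2 ≤ Real.log (1+2*t) := mr_log_lower (2*t) (by linarith)
  have hsqrt : Real.log (Real.sqrt (1+2*t)) = Real.log (1+2*t) / 2 := Real.log_sqrt hK.le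
  have hfrac : t*μ^2 - 2*t^2*μ^2 ≤ t*μ^2/(1+2*t) := by
    have heq : t*μ^2/(1+2*t) - (t*μ^2 - 2*t^2*μ^2) = 4*t^3*μ^2/(1+2*t) := by
      field_simp
      ring
    nlinarith [div_nonneg (by positivity : (0:ℝ) ≤ 4*t^3*μ^2) hK.le]
  have hL : t - t^2 + (t*μ^2 - 2*t^2*μ^2)
      ≤ Real.log (Real.sqrt (1+2*t)) + t*μ^2/(1+2*t) := by
    rw [hsqrt]
    nlinarith
  have hmul : s*(t - t^2 + (t*μ^2 - 2*t^2*μ^2))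
      ≤ s*(Real.log (Real.sqrt (1+2*t)) + t*μ^2/(1+2*t)) :=
    mul_le_mul_of_nonneg_left hL hs.le
  have hiden : t*ε - s*(t - t^2 + (t*μ^2 - 2*t^2*μ^2))
      = -((s*(1+μ^2) - ε)^2) / (4*s*(1+2*μ^2)) := by
    rw [htdef]
    field_simp
    ring
  linarith

open scoped NNReal ENNReal

private theorem mr_gauss_int (m b : ℝ) (v : ℝ≥0) (hv : v ≠ 0) (t : ℝ) (ht : 0 ≤ t) :
    ∫ x, Real.exp (-t * (x - b)^2) ∂(gaussianReal m v)
      = (Real.sqrt (1 + 2*t*(v:ℝ)))⁻¹ * Real.exp (-t * (m-b)^2 / (1 + 2*t*(v:ℝ))) := by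
  have hv0 : 0 < (v:ℝ) := NNReal.coe_pos.mpr (zero_lt_iff.mpr hv)
  have hK : 0 < 1 + 2*t*(v:ℝ) := by nlinarith
  set K := 1 + 2*t*(v:ℝ) with hKdef
  set v' : ℝ≥0 := Real.toNNReal ((v:ℝ)/K) with hv'def
  have hv'c : (v' : ℝ) = (v:ℝ)/K := Real.coe_toNNReal _ (by positivity)
  have hv'pos : 0 < ((v':ℝ≥0):ℝ) := by rw [hv'c]; positivity
  have hv' : v' ≠ 0 := by
    intro h
    rw [h] at hv'pos
    simp at hv'pos
  set m' := (m + 2*t*(v:ℝ)*b)/K with hm'def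
  have step1 : ∫ x, Real.exp (-t * (x - b)^2) ∂(gaussianReal m v)
      = ∫ x, gaussianPDFReal m v x * Real.exp (-t * (x - b)^2) := by
    rw [gaussianReal_of_var_ne_zero _ hv, gaussianPDF_def]
    have heq : (fun x => ENNReal.ofReal (gaussianPDFReal m v x))
        = fun x => ((Real.toNNReal (gaussianPDFReal m v x) : ℝ≥0) : ℝ≥0∞) := rfl
    rw [heq, integral_withDensity_eq_integral_smul
      (measurable_gaussianPDFReal m v).real_toNNReal _]
    congr 1
    funext x
    simp [NNReal.smul_def, Real.coe_toNNReal _ (gaussianPDFReal_nonneg m v x)]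
  have point : ∀ x, gaussianPDFReal m v x * Real.exp (-t * (x - b)^2)
      = ((Real.sqrt K)⁻¹ * Real.exp (-t * (m-b)^2 / K)) * gaussianPDFReal m' v' x := by
    intro x
    rw [gaussianPDFReal_def, gaussianPDFReal_def, hv'c]
    have hs : Real.sqrt (2*π*((v:ℝ)/K)) * Real.sqrt K = Real.sqrt (2*π*(v:ℝ)) := by
      rw [← Real.sqrt_mul (by positivity)]
      congr 1
      field_simp
    have hcon : (Real.sqrt (2*π*(v:ℝ)))⁻¹
        = (Real.sqrt K)⁻¹ * (Real.sqrt (2*π*((v:ℝ)/K)))⁻¹ := by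
      rw [← mul_inv, ← hs]
      ring_nf
    have hexp : -(x-m)^2/(2*(v:ℝ)) + -t*(x-b)^2
        = -t*(m-b)^2/K + -(x-m')^2/(2*((v:ℝ)/K)) := by
      rw [hm'def, hKdef]
      field_simp
      ring
    calc (Real.sqrt (2*π*(v:ℝ)))⁻¹ * rexp (-(x-m)^2/(2*(v:ℝ))) * rexp (-t*(x-b)^2)
        = (Real.sqrt (2*π*(v:ℝ)))⁻¹ * rexp (-(x-m)^2/(2*(v:ℝ)) + -t*(x-b)^2) := by
          rw [mul_assoc, ← Real.exp_add]
      _ = (Real.sqrt K)⁻¹ * (Real.sqrt (2*π*((v:ℝ)/K)))⁻¹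
            * rexp (-t*(m-b)^2/K + -(x-m')^2/(2*((v:ℝ)/K))) := by rw [hcon, hexp]
      _ = (Real.sqrt K)⁻¹ * rexp (-t*(m-b)^2/K)
            * ((Real.sqrt (2*π*((v:ℝ)/K)))⁻¹ * rexp (-(x-m')^2/(2*((v:ℝ)/K)))) := by
          rw [Real.exp_add]
          ring
  rw [step1]
  have heq2 : ∫ x, gaussianPDFReal m v x * Real.exp (-t * (x - b)^2)
      = ∫ x, ((Real.sqrt K)⁻¹ * Real.exp (-t * (m-b)^2 / K)) * gaussianPDFReal m' v' x := by
    congr 1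
    funext x
    exact point x
  rw [heq2, integral_const_mul, integral_gaussianPDFReal_eq_one m' hv', mul_one]

private theorem mr_gauss_diff_int {Ω : Type*} [MeasurableSpace Ω] {P : Measure Ω}
    [IsProbabilityMeasure P]
    {Xi Yi : Ω → ℝ} (hX : Measurable Xi) (hY : Measurable Yi) (μ₁ μ₂ : ℝ)
    (hXl : P.map Xi = gaussianReal μ₁ (1/2 : ℝ≥0)) (hYl : P.map Yi = gaussianReal μ₂ (1/2 : ℝ≥0))
    (hind : IndepFun Xi Yi P) (t : ℝ) (ht : 0 ≤ t) :
    ∫ ω, Real.exp (-t * (Xi ω - Yi ω)^2) ∂P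
      = (Real.sqrt (1+2*t))⁻¹ * Real.exp (-t*(μ₁-μ₂)^2/(1+2*t)) := by
  have ht1 : (0:ℝ) < 1 + t := by linarith
  have ht2 : (0:ℝ) < 1 + 2*t := by linarith
  have hmap : P.map (fun ω => (Xi ω, Yi ω))
      = (gaussianReal μ₁ (1/2 : ℝ≥0)).prod (gaussianReal μ₂ (1/2 : ℝ≥0)) := by
    rw [← hXl, ← hYl]
    exact (indepFun_iff_map_prod_eq_prod_map_map hX.aemeasurable hY.aemeasurable).mp hind
  have hcont : Continuous fun z : ℝ×ℝ => Real.exp (-t*(z.1-z.2)^2) := by fun_prop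
  have hstep : ∫ ω, Real.exp (-t * (Xi ω - Yi ω)^2) ∂P
      = ∫ z : ℝ×ℝ, Real.exp (-t*(z.1-z.2)^2)
          ∂((gaussianReal μ₁ (1/2 : ℝ≥0)).prod (gaussianReal μ₂ (1/2 : ℝ≥0))) := by
    rw [← hmap, integral_map (hX.prodMk hY).aemeasurable hcont.aestronglyMeasurable]
  rw [hstep]
  have hint : Integrable (fun z : ℝ×ℝ => Real.exp (-t*(z.1-z.2)^2))
      ((gaussianReal μ₁ (1/2 : ℝ≥0)).prod (gaussianReal μ₂ (1/2 : ℝ≥0))) := by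
    refine Integrable.mono' (integrable_const (1:ℝ)) hcont.aestronglyMeasurable ?_
    filter_upwards with z
    rw [Real.norm_eq_abs, abs_of_pos (Real.exp_pos _)]
    rw [Real.exp_le_one_iff]
    nlinarith [sq_nonneg (z.1 - z.2)]
  rw [integral_prod _ hint]
  have inner : ∀ x : ℝ, (∫ y, Real.exp (-t*(x-y)^2) ∂(gaussianReal μ₂ (1/2:ℝ≥0)))
      = (Real.sqrt (1+t))⁻¹ * Real.exp (-(t/(1+t)) * (x-μ₂)^2) := by
    intro x
    have he : (fun y => Real.exp (-t*(x-y)^2)) = fun y => Real.exp (-t*(y-x)^2) := by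
      funext y; ring_nf
    rw [he, mr_gauss_int μ₂ x (1/2) (by norm_num) t ht]
    have h1 : 1 + 2*t*((1/2:ℝ≥0):ℝ) = 1 + t := by push_cast; ring
    rw [h1]
    have hE : -t*(μ₂-x)^2/(1+t) = -(t/(1+t))*(x-μ₂)^2 := by ring
    rw [hE]
  simp_rw [inner]
  rw [integral_const_mul, mr_gauss_int μ₁ μ₂ (1/2) (by norm_num) (t/(1+t)) (by positivity)]
  have h2 : 1 + 2*(t/(1+t))*((1/2:ℝ≥0):ℝ) = (1+2*t)/(1+t) := by
    push_cast
    field_simp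
    ring
  rw [h2]
  have h3 : (Real.sqrt (1+t))⁻¹ * (Real.sqrt ((1+2*t)/(1+t)))⁻¹ = (Real.sqrt (1+2*t))⁻¹ := by
    rw [← mul_inv, ← Real.sqrt_mul ht1.le]
    congr 2
    field_simp
  have h4 : -(t/(1+t))*(μ₁-μ₂)^2/((1+2*t)/(1+t)) = -t*(μ₁-μ₂)^2/(1+2*t) := by
    field_simp
  rw [← mul_assoc, h3, h4]

private theorem mr_prod_integral {Ω : Type*} [MeasurableSpace Ω] {P : Measure Ω}
    [IsProbabilityMeasure P]
    {n : ℕ} {F : Fin n ⊕ (Fin n ⊕ (Fin n ⊕ Fin n)) → Ω → ℝ}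
    (hFmeas : ∀ k, Measurable (F k))
    (hindep : iIndepFun F P)
    (V : Fin n → Ω → ℝ)
    (G : Fin n → (ℝ × ℝ × ℝ × ℝ) → ℝ)
    (hG : ∀ i, Measurable (G i))
    (hV : ∀ i ω, V i ω = G i (F (.inl i) ω, F (.inr (.inl i)) ω, F (.inr (.inr (.inl i))) ω,
        F (.inr (.inr (.inr i))) ω))
    (C : ℝ) (hC : ∀ i x, |G i x| ≤ C)
    (s : Finset (Fin n)) :
    Integrable (fun ω => ∏ i ∈ s, V i ω) P ∧
      ∫ ω, ∏ i ∈ s, V i ω ∂P = ∏ i ∈ s, ∫ ω, V i ω ∂P := by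
  classical
  have hVmeas : ∀ i, Measurable (V i) := by
    intro i
    have heq : V i = fun ω => G i (F (.inl i) ω, F (.inr (.inl i)) ω,
        F (.inr (.inr (.inl i))) ω, F (.inr (.inr (.inr i))) ω) := funext (hV i)
    rw [heq]
    exact (hG i).comp ((hFmeas _).prodMk ((hFmeas _).prodMk
      ((hFmeas _).prodMk (hFmeas _))))
  have hVbd : ∀ i ω, |V i ω| ≤ C := fun i ω => (hV i ω) ▸ hC i _
  have hVint : ∀ i, Integrable (V i) P :=
    fun i => (integrable_const C).mono' (hVmeas i).aestronglyMeasurable (ae_of_all _ (hVbd i))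
  have hPmeas : ∀ u : Finset (Fin n), Measurable (fun ω => ∏ i ∈ u, V i ω) :=
    fun u => Finset.measurable_prod u (fun i _ => hVmeas i)
  have hPbd : ∀ (u : Finset (Fin n)) ω, |∏ i ∈ u, V i ω| ≤ C ^ u.card := by
    intro u ω
    rw [Finset.abs_prod]
    calc ∏ i ∈ u, |V i ω| ≤ ∏ _i ∈ u, C :=
      Finset.prod_le_prod (fun i _ => abs_nonneg _) (fun i _ => hVbd i ω)
    _ = C ^ u.card := Finset.prod_const C
  have hPint : ∀ u : Finset (Fin n), Integrable (fun ω => ∏ i ∈ u, V i ω) P :=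
    fun u => (integrable_const _).mono' (hPmeas u).aestronglyMeasurable (ae_of_all _ (hPbd u))
  refine ⟨hPint s, ?_⟩
  have key : ∀ (u : Finset (Fin n)) (j : Fin n), j ∉ u →
      IndepFun (fun ω => ∏ i ∈ u, V i ω) (V j) P := by
    intro u j hj
    set e1 : Fin n → Fin n ⊕ (Fin n ⊕ (Fin n ⊕ Fin n)) := fun i => .inl i with he1
    set e2 : Fin n → Fin n ⊕ (Fin n ⊕ (Fin n ⊕ Fin n)) := fun i => .inr (.inl i) with he2
    set e3 : Fin n → Fin n ⊕ (Fin n ⊕ (Fin n ⊕ Fin n)) := fun i => .inr (.inr (.inl i)) with he3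
    set e4 : Fin n → Fin n ⊕ (Fin n ⊕ (Fin n ⊕ Fin n)) := fun i => .inr (.inr (.inr i)) with he4
    set S : Finset (Fin n ⊕ (Fin n ⊕ (Fin n ⊕ Fin n))) :=
      u.image e1 ∪ u.image e2 ∪ u.image e3 ∪ u.image e4 with hS
    set T : Finset (Fin n ⊕ (Fin n ⊕ (Fin n ⊕ Fin n))) := {e1 j, e2 j, e3 j, e4 j} with hT
    have hm1 : ∀ i ∈ u, e1 i ∈ S := fun i hi => Finset.mem_union_left _
      (Finset.mem_union_left _ (Finset.mem_union_left _ (Finset.mem_image_of_mem _ hi)))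
    have hm2 : ∀ i ∈ u, e2 i ∈ S := fun i hi => Finset.mem_union_left _
      (Finset.mem_union_left _ (Finset.mem_union_right _ (Finset.mem_image_of_mem _ hi)))
    have hm3 : ∀ i ∈ u, e3 i ∈ S := fun i hi => Finset.mem_union_left _
      (Finset.mem_union_right _ (Finset.mem_image_of_mem _ hi))
    have hm4 : ∀ i ∈ u, e4 i ∈ S := fun i hi =>
      Finset.mem_union_right _ (Finset.mem_image_of_mem _ hi)
    have ht1 : e1 j ∈ T := by simp [hT]
    have ht2 : e2 j ∈ T := by simp [hT]
    have ht3 : e3 j ∈ T := by simp [hT]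
    have ht4 : e4 j ∈ T := by simp [hT]
    have hST : Disjoint S T := by
      rw [Finset.disjoint_left]
      intro a haS haT
      rw [hS] at haS
      rw [hT] at haT
      simp only [Finset.mem_union, Finset.mem_image] at haS
      simp only [Finset.mem_insert, Finset.mem_singleton] at haT
      rcases haS with ((⟨i, hi, rfl⟩ | ⟨i, hi, rfl⟩) | ⟨i, hi, rfl⟩) | ⟨i, hi, rfl⟩ <;>
        rcases haT with h | h | h | h <;>
        simp only [he1, he2, he3, he4, Sum.inl.injEq, Sum.inr.injEq, reduceCtorEq] at h <;>
        exact hj (h ▸ hi)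
    have base := hindep.indepFun_finset S T hST hFmeas
    have hΦSm : Measurable (fun r : (∀ _k : {x // x ∈ S}, ℝ) =>
        ∏ i ∈ u.attach, G i.1 (r ⟨e1 i.1, hm1 i.1 i.2⟩, r ⟨e2 i.1, hm2 i.1 i.2⟩,
          r ⟨e3 i.1, hm3 i.1 i.2⟩, r ⟨e4 i.1, hm4 i.1 i.2⟩)) := by
      refine Finset.measurable_prod _ (fun i _ => ?_)
      exact (hG i.1).comp ((measurable_pi_apply _).prodMk ((measurable_pi_apply _).prodMk
        ((measurable_pi_apply _).prodMk (measurable_pi_apply _))))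
    have hΦTm : Measurable (fun r : (∀ _k : {x // x ∈ T}, ℝ) =>
        G j (r ⟨e1 j, ht1⟩, r ⟨e2 j, ht2⟩, r ⟨e3 j, ht3⟩, r ⟨e4 j, ht4⟩)) :=
      (hG j).comp ((measurable_pi_apply _).prodMk ((measurable_pi_apply _).prodMk
        ((measurable_pi_apply _).prodMk (measurable_pi_apply _))))
    have hcomp := base.comp hΦSm hΦTm
    have hSeq : ((fun r : (∀ _k : {x // x ∈ S}, ℝ) =>
        ∏ i ∈ u.attach, G i.1 (r ⟨e1 i.1, hm1 i.1 i.2⟩, r ⟨e2 i.1, hm2 i.1 i.2⟩,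
          r ⟨e3 i.1, hm3 i.1 i.2⟩, r ⟨e4 i.1, hm4 i.1 i.2⟩)) ∘
        (fun ω (k : {x // x ∈ S}) => F k.1 ω)) = fun ω => ∏ i ∈ u, V i ω := by
      funext ω
      simp only [Function.comp_apply]
      rw [← Finset.prod_attach u (fun i => V i ω)]
      exact Finset.prod_congr rfl (fun i _ => ((hV i.1 ω).symm))
    have hTeq : ((fun r : (∀ _k : {x // x ∈ T}, ℝ) =>
        G j (r ⟨e1 j, ht1⟩, r ⟨e2 j, ht2⟩, r ⟨e3 j, ht3⟩, r ⟨e4 j, ht4⟩)) ∘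
        (fun ω (k : {x // x ∈ T}) => F k.1 ω)) = V j := by
      funext ω
      exact (hV j ω).symm
    rwa [hSeq, hTeq] at hcomp
  induction s using Finset.induction_on with
  | empty => simp
  | @insert j u hj ih =>
    have heq : (fun ω => ∏ i ∈ insert j u, V i ω) = fun ω => (∏ i ∈ u, V i ω) * V j ω := by
      funext ω
      rw [Finset.prod_insert hj]
      ring
    calc ∫ ω, ∏ i ∈ insert j u, V i ω ∂P = ∫ ω, (∏ i ∈ u, V i ω) * V j ω ∂P := by rw [heq]
      _ = (∫ ω, ∏ i ∈ u, V i ω ∂P) * ∫ ω, V j ω ∂P :=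
          (key u j hj).integral_fun_mul_eq_mul_integral (hPint u).aestronglyMeasurable (hVint j).aestronglyMeasurable
      _ = ∏ i ∈ insert j u, ∫ ω, V i ω ∂P := by
          rw [ih, Finset.prod_insert hj]
          ring

end MRAux

set_option maxHeartbeats 2000000 in
open scoped Classical in
/-- Tail bound for the distance estimated by the MR-Missing algorithm between two
Gaussian points with independently observed coordinates. `X ~ N(μ₁·𝟏, ½I)`,
`Y ~ N(μ₂·𝟏, ½I)` in `ℝⁿ` with all coordinates independent; the `{0,1}`-valued masks
`A`, `B` record which coordinates of `X` (resp. `Y`) are observed, each coordinate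
independently with probability `p`, independently of everything else. `Q(ω)` is the set
of coordinates observed in both points, and the estimated squared distance is
`d_p(X,Y)² = ∑_{i ∈ Q} (X_i − Y_i)²`. Then with `μ = μ₁ − μ₂`, `q = p²`, for all
`0 < ε < q(1+μ²)` and `0 < γ < (q(1+μ²) − ε)/(1+μ²)`,
`Pr[d_p(X,Y)² < εn] ≤ exp(−2γ²n) + exp(−((q−γ)(1+μ²) − ε)²/(4(q−γ)(1+2μ²)))ⁿ`. -/
theorem stmt_0 {Ω : Type*} [MeasurableSpace Ω] (P : Measure Ω) [IsProbabilityMeasure P]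
    (n : ℕ) (hn : 1 ≤ n) (μ₁ μ₂ : ℝ) (p : ℝ) (hp0 : 0 < p) (hp1 : p ≤ 1)
    (X Y : Ω → Fin n → ℝ) (A B : Ω → Fin n → ℝ)
    (hXmeas : ∀ i, Measurable fun ω => X ω i)
    (hYmeas : ∀ i, Measurable fun ω => Y ω i)
    (hAmeas : ∀ i, Measurable fun ω => A ω i)
    (hBmeas : ∀ i, Measurable fun ω => B ω i)
    -- all the coordinates of `X`, `Y` and of the masks `A`, `B` are mutually independent
    (hindep : iIndepFun
      (Sum.elim (fun (i : Fin n) ω => X ω i)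
        (Sum.elim (fun (i : Fin n) ω => Y ω i)
          (Sum.elim (fun (i : Fin n) ω => A ω i) (fun (i : Fin n) ω => B ω i)))) P)
    -- each coordinate of `X` is `N(μ₁, 1/2)` and each coordinate of `Y` is `N(μ₂, 1/2)`
    (hXlaw : ∀ i, Measure.map (fun ω => X ω i) P = gaussianReal μ₁ (1 / 2 : NNReal))
    (hYlaw : ∀ i, Measure.map (fun ω => Y ω i) P = gaussianReal μ₂ (1 / 2 : NNReal))
    -- each coordinate is observed (mask value `1`) with probability `p`
    (hA1 : ∀ i, P {ω | A ω i = 1} = ENNReal.ofReal p)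
    (hA0 : ∀ i, P {ω | A ω i = 0} = ENNReal.ofReal (1 - p))
    (hB1 : ∀ i, P {ω | B ω i = 1} = ENNReal.ofReal p)
    (hB0 : ∀ i, P {ω | B ω i = 0} = ENNReal.ofReal (1 - p))
    (μ q : ℝ) (hμ : μ = μ₁ - μ₂) (hq : q = p ^ 2)
    (ε : ℝ) (hε0 : 0 < ε) (hε : ε < q * (1 + μ ^ 2))
    (γ : ℝ) (hγ0 : 0 < γ) (hγ : γ < (q * (1 + μ ^ 2) - ε) / (1 + μ ^ 2)) :
    P {ω | ∑ i ∈ Finset.univ.filter (fun i => A ω i = 1 ∧ B ω i = 1),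
          (X ω i - Y ω i) ^ 2 < ε * n} ≤
      ENNReal.ofReal
        (Real.exp (-2 * γ ^ 2 * n) +
          Real.exp (-((q - γ) * (1 + μ ^ 2) - ε) ^ 2 /
            (4 * (q - γ) * (1 + 2 * μ ^ 2))) ^ n) := by
  classical
  -- basic numeric facts
  have hμ2 : (0:ℝ) < 1 + μ^2 := by positivity
  have hq0 : 0 < q := by rw [hq]; positivity
  have hq1 : q ≤ 1 := by rw [hq]; nlinarith
  have hγq : γ * (1+μ^2) < q * (1+μ^2) - ε := (lt_div_iff₀ hμ2).mp hγ
  have hs : 0 < q - γ := by nlinarith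
  have hδ : 0 < (q - γ)*(1+μ^2) - ε := by nlinarith
  have hm2 : (0:ℝ) < 1 + 2*μ^2 := by positivity
  set t2 : ℝ := ((q-γ)*(1+μ^2) - ε)/(2*(q-γ)*(1+2*μ^2)) with ht2def
  have ht2 : 0 < t2 := div_pos hδ (by positivity)
  set K2 : ℝ := 1+2*t2 with hK2def
  have hK2 : 0 < K2 := by rw [hK2def]; linarith
  set L : ℝ := Real.log (Real.sqrt K2) + t2*μ^2/K2 with hLdef
  have hL0 : 0 ≤ L := by
    rw [hLdef]
    have h1 : 0 ≤ Real.log (Real.sqrt K2) := by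
      rw [Real.log_sqrt hK2.le]
      have := Real.log_nonneg (by rw [hK2def]; linarith : (1:ℝ) ≤ K2)
      linarith
    have h2 : 0 ≤ t2*μ^2/K2 := by positivity
    linarith
  set Mt : ℝ := (Real.sqrt K2)⁻¹ * Real.exp (-t2*μ^2/K2) with hMtdef
  have hsqK2 : 0 < Real.sqrt K2 := Real.sqrt_pos.mpr hK2
  have hMt0 : 0 < Mt := by rw [hMtdef]; positivity
  have hcMt : Real.exp L * Mt = 1 := by
    rw [hLdef, hMtdef, Real.exp_add, Real.exp_log hsqK2,
      show -t2*μ^2/K2 = -(t2*μ^2/K2) by ring, Real.exp_neg]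
    have h1 : Real.sqrt K2 ≠ 0 := ne_of_gt hsqK2
    have h2 : Real.exp (t2*μ^2/K2) ≠ 0 := (Real.exp_pos _).ne'
    field_simp
  set t1 : ℝ := -(4*γ) with ht1def
  have ht1np : t1 ≤ 0 := by rw [ht1def]; linarith
  -- definitions
  set Z : Fin n → Ω → ℝ := fun i ω => X ω i - Y ω i with hZdef
  have hZm : ∀ i, Measurable (Z i) := fun i => (hXmeas i).sub (hYmeas i)
  set SAB : Fin n → Set Ω := fun i => {ω | A ω i = 1} ∩ {ω | B ω i = 1} with hSABdef
  have hSABm : ∀ i, MeasurableSet (SAB i) := fun i =>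
    ((hAmeas i) (measurableSet_singleton 1)).inter ((hBmeas i) (measurableSet_singleton 1))
  set W : Fin n → Ω → ℝ := fun i ω => if A ω i = 1 ∧ B ω i = 1 then 1 else 0 with hWdef
  have hWind : ∀ i, W i = (SAB i).indicator (fun _ => (1:ℝ)) := by
    intro i
    funext ω
    by_cases h : A ω i = 1 ∧ B ω i = 1
    · rw [hWdef]
      simp only [if_pos h]
      exact (Set.indicator_of_mem (show ω ∈ SAB i from ⟨h.1, h.2⟩) (fun _ => (1:ℝ))).symm
    · rw [hWdef]
      simp only [if_neg h]
      exact (Set.indicator_of_notMem (show ω ∉ SAB i from fun hc => h ⟨hc.1, hc.2⟩)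
        (fun _ => (1:ℝ))).symm
  have hWm : ∀ i, Measurable (W i) := by
    intro i
    rw [hWind i]
    exact measurable_const.indicator (hSABm i)
  have hW01 : ∀ i ω, W i ω = 0 ∨ W i ω = 1 := by
    intro i ω
    rw [hWdef]
    by_cases h : A ω i = 1 ∧ B ω i = 1
    · right; simp [h]
    · left; simp [h]
  have hWbd : ∀ i ω, ‖W i ω‖ ≤ 1 := by
    intro i ω
    rcases hW01 i ω with h | h <;> rw [h] <;> simp
  have hWint : ∀ i, Integrable (W i) P := fun i =>
    (integrable_const (1:ℝ)).mono' (hWm i).aestronglyMeasurable (ae_of_all _ (hWbd i))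
  -- family measurability
  have hFmeas : ∀ k : Fin n ⊕ (Fin n ⊕ (Fin n ⊕ Fin n)),
      Measurable ((Sum.elim (fun (i : Fin n) ω => X ω i)
        (Sum.elim (fun (i : Fin n) ω => Y ω i)
          (Sum.elim (fun (i : Fin n) ω => A ω i) (fun (i : Fin n) ω => B ω i)))) k) := by
    rintro (i | i | i | i)
    exacts [hXmeas i, hYmeas i, hAmeas i, hBmeas i]
  -- probability of both observed
  have hPAB : ∀ i, P (SAB i) = ENNReal.ofReal q := by
    intro i
    have hAB : IndepFun (fun ω => A ω i) (fun ω => B ω i) P :=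
      hindep.indepFun (show (Sum.inr (Sum.inr (Sum.inl i)) : Fin n ⊕ (Fin n ⊕ (Fin n ⊕ Fin n)))
        ≠ Sum.inr (Sum.inr (Sum.inr i)) by simp)
    have h := (indepFun_iff_measure_inter_preimage_eq_mul.mp hAB) {1} {1}
      (measurableSet_singleton 1) (measurableSet_singleton 1)
    have hpre : (fun ω => A ω i) ⁻¹' {1} ∩ (fun ω => B ω i) ⁻¹' {1} = SAB i := rfl
    have hA' : P ((fun ω => A ω i) ⁻¹' {1}) = ENNReal.ofReal p := hA1 i
    have hB' : P ((fun ω => B ω i) ⁻¹' {1}) = ENNReal.ofReal p := hB1 i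
    rw [hpre, hA', hB'] at h
    rw [h, ← ENNReal.ofReal_mul hp0.le]
    congr 1
    rw [hq]
    ring
  have hEW : ∀ i, ∫ ω, W i ω ∂P = q := by
    intro i
    rw [show (fun ω => W i ω) = W i from rfl, hWind i, integral_indicator_const _ (hSABm i),
      measureReal_def, hPAB i, ENNReal.toReal_ofReal hq0.le]
    simp
  -- measurable 4-tuple indicator
  have hw4 : Measurable (fun x : ℝ×ℝ×ℝ×ℝ => if x.2.2.1 = 1 ∧ x.2.2.2 = 1 then (1:ℝ) else 0) := by
    have h1 : Measurable (fun x : ℝ×ℝ×ℝ×ℝ => x.2.2.1) := by fun_prop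
    have h2 : Measurable (fun x : ℝ×ℝ×ℝ×ℝ => x.2.2.2) := by fun_prop
    have hset : MeasurableSet {x : ℝ×ℝ×ℝ×ℝ | x.2.2.1 = 1 ∧ x.2.2.2 = 1} :=
      (h1 (measurableSet_singleton 1)).inter (h2 (measurableSet_singleton 1))
    exact Measurable.ite hset measurable_const measurable_const
  -- the first product (Chernoff for the count)
  have hprod1 := mr_prod_integral hFmeas hindep
    (fun i ω => Real.exp (t1 * W i ω))
    (fun _i x => Real.exp (t1 * (if x.2.2.1 = 1 ∧ x.2.2.2 = 1 then (1:ℝ) else 0)))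
    (fun _i => (measurable_const.mul hw4).exp)
    (fun i ω => rfl)
    1
    (by
      intro i x
      rw [abs_of_pos (Real.exp_pos _), Real.exp_le_one_iff]
      by_cases h : x.2.2.1 = 1 ∧ x.2.2.2 = 1
      · simp only [if_pos h, mul_one]; exact ht1np
      · simp [if_neg h])
    Finset.univ
  have hEV1 : ∀ i, ∫ ω, Real.exp (t1 * W i ω) ∂P = 1 - q + q * Real.exp t1 := by
    intro i
    have hpt : (fun ω => Real.exp (t1 * W i ω))
        = fun ω => (SAB i).indicator (fun _ => Real.exp t1 - 1) ω + 1 := by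
      funext ω
      by_cases h : A ω i = 1 ∧ B ω i = 1
      · rw [hWdef]
        simp only [if_pos h, mul_one]
        rw [Set.indicator_of_mem (show ω ∈ SAB i from ⟨h.1, h.2⟩)
          (f := fun _ => Real.exp t1 - 1)]
        ring
      · rw [hWdef]
        simp only [if_neg h, mul_zero, Real.exp_zero]
        rw [Set.indicator_of_notMem (show ω ∉ SAB i from fun hc => h ⟨hc.1, hc.2⟩)
          (f := fun _ => Real.exp t1 - 1)]
        ring
    rw [hpt, integral_add ((integrable_const _).indicator (hSABm i)) (integrable_const 1),
      integral_indicator_const _ (hSABm i), integral_const, measureReal_def P (SAB i), hPAB i,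
      ENNReal.toReal_ofReal hq0.le, probReal_univ]
    simp
    ring
  have hI1 : ∫ ω, ∏ i, Real.exp (t1 * W i ω) ∂P = (1 - q + q * Real.exp t1)^n := by
    rw [hprod1.2, Finset.prod_congr rfl (fun i _ => hEV1 i), Finset.prod_const,
      Finset.card_univ, Fintype.card_fin]
  -- the second product
  have hG2bd : ∀ (_i : Fin n) (x : ℝ×ℝ×ℝ×ℝ),
      |Real.exp ((L - t2*(x.1 - x.2.1)^2) * (if x.2.2.1 = 1 ∧ x.2.2.2 = 1 then (1:ℝ) else 0))|
        ≤ Real.exp L := by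
    intro i x
    rw [abs_of_pos (Real.exp_pos _), Real.exp_le_exp]
    by_cases h : x.2.2.1 = 1 ∧ x.2.2.2 = 1
    · simp only [if_pos h, mul_one]
      nlinarith [sq_nonneg (x.1 - x.2.1), ht2]
    · simp only [if_neg h, mul_zero]
      exact hL0
  have hG2m : ∀ _i : Fin n, Measurable (fun x : ℝ×ℝ×ℝ×ℝ =>
      Real.exp ((L - t2*(x.1 - x.2.1)^2) * (if x.2.2.1 = 1 ∧ x.2.2.2 = 1 then (1:ℝ) else 0))) := by
    intro i
    apply Measurable.exp
    exact (measurable_const.sub ((((measurable_fst).sub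
      (measurable_fst.comp measurable_snd)).pow_const 2).const_mul t2)).mul hw4
  have hprod2 := mr_prod_integral hFmeas hindep
    (fun i ω => Real.exp ((L - t2*(Z i ω)^2) * W i ω))
    (fun _i x => Real.exp ((L - t2*(x.1 - x.2.1)^2) *
      (if x.2.2.1 = 1 ∧ x.2.2.2 = 1 then (1:ℝ) else 0)))
    hG2m
    (fun i ω => rfl)
    (Real.exp L)
    hG2bd
    Finset.univ
  have hEV2 : ∀ i, ∫ ω, Real.exp ((L - t2*(Z i ω)^2) * W i ω) ∂P = 1 := by
    intro i
    have hXYind : IndepFun (fun ω => X ω i) (fun ω => Y ω i) P :=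
      hindep.indepFun (show (Sum.inl i : Fin n ⊕ (Fin n ⊕ (Fin n ⊕ Fin n)))
        ≠ Sum.inr (Sum.inl i) by simp)
    have hMt_int : ∫ ω, Real.exp (-t2 * (Z i ω)^2) ∂P = Mt := by
      have hgd := mr_gauss_diff_int (hXmeas i) (hYmeas i) μ₁ μ₂ (hXlaw i) (hYlaw i)
        hXYind t2 ht2.le
      rw [hMtdef, hK2def, hμ]
      exact hgd
    have hexpZm : Measurable (fun ω => Real.exp (-t2 * (Z i ω)^2)) :=
      (((hZm i).pow_const 2).const_mul (-t2)).exp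
    have hexpZbd : ∀ ω, ‖Real.exp (-t2 * (Z i ω)^2)‖ ≤ 1 := by
      intro ω
      rw [Real.norm_eq_abs, abs_of_pos (Real.exp_pos _), Real.exp_le_one_iff]
      nlinarith [sq_nonneg (Z i ω), ht2]
    have hexpZint : Integrable (fun ω => Real.exp (-t2 * (Z i ω)^2)) P :=
      (integrable_const (1:ℝ)).mono' hexpZm.aestronglyMeasurable (ae_of_all _ hexpZbd)
    have hzint : Integrable (fun ω => Real.exp L * Real.exp (-t2 * (Z i ω)^2) - 1) P :=
      (hexpZint.const_mul _).sub (integrable_const 1)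
    have hWZind : IndepFun (W i) (fun ω => Real.exp L * Real.exp (-t2 * (Z i ω)^2) - 1) P := by
      have base := hindep.indepFun_prodMk_prodMk hFmeas
        (Sum.inr (Sum.inr (Sum.inl i))) (Sum.inr (Sum.inr (Sum.inr i)))
        (Sum.inl i) (Sum.inr (Sum.inl i))
        (by simp) (by simp) (by simp) (by simp)
      have hgw : Measurable (fun ab : ℝ×ℝ => if ab.1 = 1 ∧ ab.2 = 1 then (1:ℝ) else 0) := by
        have hset : MeasurableSet {ab : ℝ×ℝ | ab.1 = 1 ∧ ab.2 = 1} :=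
          (measurable_fst (measurableSet_singleton 1)).inter
            (measurable_snd (measurableSet_singleton 1))
        exact Measurable.ite hset measurable_const measurable_const
      have hgz : Measurable (fun xy : ℝ×ℝ =>
          Real.exp L * Real.exp (-t2 * (xy.1 - xy.2)^2) - 1) := by fun_prop
      exact base.comp hgw hgz
    have hpt2 : (fun ω => Real.exp ((L - t2*(Z i ω)^2) * W i ω))
        = fun ω => 1 + W i ω * (Real.exp L * Real.exp (-t2 * (Z i ω)^2) - 1) := by
      funext ω
      rw [hWdef]
      by_cases h : A ω i = 1 ∧ B ω i = 1
      · simp only [if_pos h, mul_one, one_mul]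
        rw [← Real.exp_add]
        have : L + -t2 * (Z i ω)^2 = L - t2*(Z i ω)^2 := by ring
        rw [this]
        ring
      · simp only [if_neg h, mul_zero, zero_mul, Real.exp_zero, add_zero]
    rw [hpt2]
    have hmulint : Integrable
        (fun ω => W i ω * (Real.exp L * Real.exp (-t2 * (Z i ω)^2) - 1)) P :=
      hWZind.integrable_mul (hWint i) hzint
    rw [integral_add (integrable_const 1) hmulint, integral_const, probReal_univ]
    have hsplit := hWZind.integral_fun_mul_eq_mul_integral (hWint i).aestronglyMeasurable hzint.aestronglyMeasurable
    have hEz : ∫ ω, (Real.exp L * Real.exp (-t2 * (Z i ω)^2) - 1) ∂P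
        = Real.exp L * Mt - 1 := by
      rw [integral_sub (hexpZint.const_mul _) (integrable_const 1), integral_const,
        probReal_univ, integral_const_mul, hMt_int]
      simp
    have hmuleq : ∫ ω, W i ω * (Real.exp L * Real.exp (-t2 * (Z i ω)^2) - 1) ∂P
        = (∫ ω, W i ω ∂P) * ∫ ω, (Real.exp L * Real.exp (-t2 * (Z i ω)^2) - 1) ∂P := hsplit
    rw [hmuleq, hEW i, hEz, hcMt]
    simp
  have hI2 : ∫ ω, ∏ i, Real.exp ((L - t2*(Z i ω)^2) * W i ω) ∂P = 1 := by
    rw [hprod2.2, Finset.prod_congr rfl (fun i _ => hEV2 i), Finset.prod_const, one_pow]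
  -- Markov inequality helper
  have markov : ∀ (f : Ω → ℝ), (∀ ω, 0 ≤ f ω) → Integrable f P → ∀ a : ℝ, 0 < a →
      P {ω | a ≤ f ω} ≤ ENNReal.ofReal ((∫ ω, f ω ∂P) / a) := by
    intro f hfnn hfi a ha
    have h := mul_meas_ge_le_integral_of_nonneg (ae_of_all _ hfnn) hfi a
    rw [ENNReal.le_ofReal_iff_toReal_le (measure_ne_top P _)
      (div_nonneg (integral_nonneg hfnn) ha.le), le_div_iff₀ ha, mul_comm]
    exact h
  -- event decomposition
  have hsub : {ω | ∑ i, W i ω * (Z i ω)^2 < ε*(n:ℝ)}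
      ⊆ {ω | Real.exp (t1 * ((q-γ)*(n:ℝ))) ≤ ∏ i, Real.exp (t1 * W i ω)}
        ∪ {ω | Real.exp (-(t2*(ε*(n:ℝ))) + (q-γ)*(n:ℝ)*L)
            ≤ ∏ i, Real.exp ((L - t2*(Z i ω)^2) * W i ω)} := by
    intro ω hω
    simp only [Set.mem_setOf_eq] at hω
    by_cases hc : ∑ i, W i ω ≤ (q-γ)*(n:ℝ)
    · left
      simp only [Set.mem_setOf_eq]
      rw [← Real.exp_sum, ← Finset.mul_sum]
      exact Real.exp_le_exp.mpr (mul_le_mul_of_nonpos_left hc ht1np)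
    · right
      push_neg at hc
      simp only [Set.mem_setOf_eq]
      rw [← Real.exp_sum]
      apply Real.exp_le_exp.mpr
      have hsumeq : ∑ i, (L - t2*(Z i ω)^2) * W i ω
          = L * (∑ i, W i ω) - t2 * (∑ i, W i ω * (Z i ω)^2) := by
        rw [Finset.mul_sum, Finset.mul_sum, ← Finset.sum_sub_distrib]
        exact Finset.sum_congr rfl (fun i _ => by ring)
      rw [hsumeq]
      have h1 : L * ((q-γ)*(n:ℝ)) ≤ L * ∑ i, W i ω := mul_le_mul_of_nonneg_left hc.le hL0
      have h2 : t2 * (∑ i, W i ω * (Z i ω)^2) ≤ t2 * (ε*(n:ℝ)) :=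
        mul_le_mul_of_nonneg_left hω.le ht2.le
      have h3 : (q-γ)*(n:ℝ)*L = L * ((q-γ)*(n:ℝ)) := by ring
      linarith
  have hsetEq : {ω | ∑ i ∈ Finset.univ.filter (fun i => A ω i = 1 ∧ B ω i = 1),
        (X ω i - Y ω i) ^ 2 < ε * (n:ℝ)}
      = {ω | ∑ i, W i ω * (Z i ω)^2 < ε*(n:ℝ)} := by
    ext ω
    simp only [Set.mem_setOf_eq]
    have hseq : ∑ i ∈ Finset.univ.filter (fun i => A ω i = 1 ∧ B ω i = 1),
        (X ω i - Y ω i) ^ 2 = ∑ i, W i ω * (Z i ω)^2 := by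
      rw [Finset.sum_filter]
      refine Finset.sum_congr rfl (fun i _ => ?_)
      by_cases h : A ω i = 1 ∧ B ω i = 1
      · rw [if_pos h, hWdef]
        simp [h, hZdef]
      · rw [if_neg h, hWdef]
        simp [h]
    rw [hseq]
  -- first term bound
  have hterm1 : P {ω | Real.exp (t1 * ((q-γ)*(n:ℝ))) ≤ ∏ i, Real.exp (t1 * W i ω)}
      ≤ ENNReal.ofReal (Real.exp (-2 * γ^2 * (n:ℝ))) := by
    refine le_trans (markov _ (fun ω => Finset.prod_nonneg (fun i _ => (Real.exp_pos _).le))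
      hprod1.1 _ (Real.exp_pos _)) (ENNReal.ofReal_le_ofReal ?_)
    rw [hI1]
    have hb0 : 0 ≤ 1 - q + q * Real.exp t1 := by nlinarith [Real.exp_pos t1]
    have hb1 : 1 - q + q * Real.exp t1 ≤ Real.exp (q*t1 + t1^2/8) :=
      mr_bernoulli q t1 hq0.le hq1 ht1np
    calc (1 - q + q * Real.exp t1)^n / Real.exp (t1 * ((q-γ)*(n:ℝ)))
        ≤ (Real.exp (q*t1 + t1^2/8))^n / Real.exp (t1 * ((q-γ)*(n:ℝ))) := by
          exact (div_le_div_iff_of_pos_right (Real.exp_pos _)).mpr (pow_le_pow_left₀ hb0 hb1 n)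
      _ = Real.exp ((q*t1 + t1^2/8)*(n:ℝ) - t1 * ((q-γ)*(n:ℝ))) := by
          rw [← Real.exp_nat_mul, ← Real.exp_sub]
          congr 1
          ring
      _ ≤ Real.exp (-2 * γ^2 * (n:ℝ)) := by
          apply Real.exp_le_exp.mpr
          apply le_of_eq
          rw [ht1def]
          ring
  -- second term bound
  have hterm2 : P {ω | Real.exp (-(t2*(ε*(n:ℝ))) + (q-γ)*(n:ℝ)*L)
        ≤ ∏ i, Real.exp ((L - t2*(Z i ω)^2) * W i ω)}
      ≤ ENNReal.ofReal (Real.exp (-((q - γ) * (1 + μ ^ 2) - ε) ^ 2 /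
          (4 * (q - γ) * (1 + 2 * μ ^ 2))) ^ n) := by
    refine le_trans (markov _ (fun ω => Finset.prod_nonneg (fun i _ => (Real.exp_pos _).le))
      hprod2.1 _ (Real.exp_pos _)) (ENNReal.ofReal_le_ofReal ?_)
    rw [hI2]
    have hnum := mr_numeric (q-γ) ε μ hs hδ
    rw [← ht2def, ← hK2def, ← hLdef] at hnum
    calc 1 / Real.exp (-(t2*(ε*(n:ℝ))) + (q-γ)*(n:ℝ)*L)
        = Real.exp (t2*(ε*(n:ℝ)) - (q-γ)*(n:ℝ)*L) := by
          rw [one_div, ← Real.exp_neg]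
          congr 1
          ring
      _ ≤ Real.exp ((n:ℝ) * (-((q - γ) * (1 + μ ^ 2) - ε) ^ 2 /
            (4 * (q - γ) * (1 + 2 * μ ^ 2)))) := by
          apply Real.exp_le_exp.mpr
          have hmuln := mul_le_mul_of_nonneg_right hnum (Nat.cast_nonneg n : (0:ℝ) ≤ (n:ℝ))
          calc t2*(ε*(n:ℝ)) - (q-γ)*(n:ℝ)*L
              = (t2*ε - (q-γ)*L)*(n:ℝ) := by ring
            _ ≤ (-((q-γ)*(1+μ^2) - ε)^2 / (4*(q-γ)*(1+2*μ^2)))*(n:ℝ) := hmuln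
            _ = (n:ℝ) * (-((q - γ) * (1 + μ ^ 2) - ε) ^ 2 /
                (4 * (q - γ) * (1 + 2 * μ ^ 2))) := by ring
      _ = Real.exp (-((q - γ) * (1 + μ ^ 2) - ε) ^ 2 /
            (4 * (q - γ) * (1 + 2 * μ ^ 2))) ^ n := Real.exp_nat_mul _ n
  -- conclusion
  rw [hsetEq]
  calc P {ω | ∑ i, W i ω * (Z i ω)^2 < ε*(n:ℝ)}
      ≤ P ({ω | Real.exp (t1 * ((q-γ)*(n:ℝ))) ≤ ∏ i, Real.exp (t1 * W i ω)}
          ∪ {ω | Real.exp (-(t2*(ε*(n:ℝ))) + (q-γ)*(n:ℝ)*L)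
              ≤ ∏ i, Real.exp ((L - t2*(Z i ω)^2) * W i ω)}) := measure_mono hsub
    _ ≤ P {ω | Real.exp (t1 * ((q-γ)*(n:ℝ))) ≤ ∏ i, Real.exp (t1 * W i ω)}
          + P {ω | Real.exp (-(t2*(ε*(n:ℝ))) + (q-γ)*(n:ℝ)*L)
              ≤ ∏ i, Real.exp ((L - t2*(Z i ω)^2) * W i ω)} := measure_union_le _ _
    _ ≤ ENNReal.ofReal (Real.exp (-2 * γ^2 * (n:ℝ)))
          + ENNReal.ofReal (Real.exp (-((q - γ) * (1 + μ ^ 2) - ε) ^ 2 /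
              (4 * (q - γ) * (1 + 2 * μ ^ 2))) ^ n) := add_le_add hterm1 hterm2
    _ = ENNReal.ofReal (Real.exp (-2 * γ^2 * (n:ℝ))
          + Real.exp (-((q - γ) * (1 + μ ^ 2) - ε) ^ 2 /
              (4 * (q - γ) * (1 + 2 * μ ^ 2))) ^ n) :=
        (ENNReal.ofReal_add (Real.exp_pos _).le (pow_nonneg (Real.exp_pos _).le n)).symm
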